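/- Suppose in every slot n the per-slot drift-minus-utility bound is minimized so that Δ(X[n]) − V·E[u[n] | X[n]] ≤ D − V·u*, with X[0] = 0. Then the achieved long-term average utility satisfies liminf_{T→∞} (1/T)·Σ_{n=0}^{T−1} E[u[n]] ≥ u* − D/V. -/

import Mathlib

open Filter

/-- If the per-slot drift-minus-utility bound `Δ(X[n]) - V E[u[n]] ≤ D - V u*` holds in every
slot (with `L n = E[(1/2)X²[n]]`, `L 0 = 0`), then the long-term average utility is within
`D/V` of the optimum `u*`. -/
theorem utility_near_optimal (V D ustar M : ℝ) (hV : 0 < V) (hD : 0 < D)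
    (L u : ℕ → ℝ) (hL0 : L 0 = 0) (hLnn : ∀ n, 0 ≤ L n)
    (hbound : ∀ n, |u n| ≤ M)
    (hdrift : ∀ n : ℕ, (L (n+1) - L n) - V * u n ≤ D - V * ustar) :
    ustar - D / V ≤
      atTop.liminf (fun T : ℕ => (1 / (T : ℝ)) * ∑ n ∈ Finset.range T, u n) := by
  have key : ∀ T : ℕ, (T : ℝ) * (ustar - D / V) ≤ ∑ n ∈ Finset.range T, u n := by
    intro T
    have hsum : L T - L 0 - V * ∑ n ∈ Finset.range T, u n ≤ (T : ℝ) * (D - V * ustar) := by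
      have := Finset.sum_le_sum (fun n (_ : n ∈ Finset.range T) => hdrift n)
      simp [Finset.sum_sub_distrib, Finset.sum_range_succ_sub_sum,
        Finset.sum_range_sub (fun n => L n), Finset.mul_sum, Finset.sum_const,
        mul_comm] at this ⊢; linarith
    have hLT := hLnn T
    rw [hL0, sub_zero] at hsum
    have h2 : V * ((T : ℝ) * (ustar - D / V)) ≤ V * ∑ n ∈ Finset.range T, u n := by
      have : V * ((T : ℝ) * (ustar - D / V)) = (T : ℝ) * (V * ustar - D) := by
        field_simp
      rw [this]
      nlinarith
    exact le_of_mul_le_mul_left h2 hV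
  have hev : ∀ᶠ T : ℕ in atTop, ustar - D / V ≤
      (1 / (T : ℝ)) * ∑ n ∈ Finset.range T, u n := by
    filter_upwards [eventually_ge_atTop 1] with T hT
    have hT' : (0 : ℝ) < T := by exact_mod_cast hT
    rw [one_div, ← div_eq_inv_mul, le_div_iff₀ hT']
    linarith [key T]
  apply le_liminf_of_le
  · -- cobounded: sequence bounded above by |M| eventually? bounded above
    refine IsBoundedUnder.isCoboundedUnder_ge ?_
    refine ⟨|M|, eventually_map.2 ?_⟩
    filter_upwards [eventually_ge_atTop 1] with T hT
    have hT' : (0 : ℝ) < T := by exact_mod_cast hT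
    have h1 : |∑ n ∈ Finset.range T, u n| ≤ (T : ℝ) * M := by
      calc |∑ n ∈ Finset.range T, u n| ≤ ∑ n ∈ Finset.range T, |u n| :=
            Finset.abs_sum_le_sum_abs _ _
        _ ≤ ∑ n ∈ Finset.range T, M := Finset.sum_le_sum fun n _ => hbound n
        _ = (T : ℝ) * M := by simp [mul_comm]
    have hM : M ≤ |M| := le_abs_self M
    calc (1 / (T : ℝ)) * ∑ n ∈ Finset.range T, u n
        ≤ (1 / (T : ℝ)) * |∑ n ∈ Finset.range T, u n| := by
          apply mul_le_mul_of_nonneg_left (le_abs_self _) (by positivity)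
      _ ≤ (1 / (T : ℝ)) * ((T : ℝ) * M) := by
          apply mul_le_mul_of_nonneg_left h1 (by positivity)
      _ = M := by field_simp
      _ ≤ |M| := hM
  · exact hev
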